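/- The number of self-conjugate 3-core partitions of n, sc₃(n), equals 1 if n = r(3r±2) for some r ≥ 1, and 0 otherwise. -/

import Mathlib

/-- Hook length of the (0-indexed) cell `(i, j)` of a Young diagram. -/
def hookLen (γ : YoungDiagram) (i j : ℕ) : ℕ :=
  γ.rowLen i + γ.colLen j - i - j - 1

/-- A partition (Young diagram) is `t`-core if no hook length is divisible by `t`. -/
def IsTCore (γ : YoungDiagram) (t : ℕ) : Prop :=
  ∀ c ∈ γ.cells, ¬ t ∣ hookLen γ c.1 c.2

/-- The side length of the Durfee square: the number of diagonal cells. -/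
def durfee (γ : YoungDiagram) : ℕ :=
  (γ.cells.filter fun c => c.1 = c.2).card

-- assume prior: Gamma, mem_Gamma, Gamma_transpose, grow, rowLen_Gamma, card_eq_sum_rowLens', sumA, sumB
def Gamma (r c : ℕ) : YoungDiagram where
  cells := (Finset.range c ×ˢ Finset.range c).filter
    (fun p => (p.1 < r ∧ p.2 + 2 * p.1 < c) ∨ (p.2 < r ∧ p.1 + 2 * p.2 < c))
  isLowerSet := by
    rintro ⟨i, j⟩ ⟨i', j'⟩ ⟨hi, hj⟩ hm
    simp only [Finset.coe_filter, Finset.mem_coe, Finset.mem_product, Finset.mem_range,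
      Set.mem_setOf_eq] at hm ⊢
    obtain ⟨⟨h1, h2⟩, h3⟩ := hm
    refine ⟨⟨?_, ?_⟩, ?_⟩ <;> omega

theorem mem_Gamma {r c i j : ℕ} :
    (i, j) ∈ Gamma r c ↔ (i < r ∧ j + 2 * i < c) ∨ (j < r ∧ i + 2 * j < c) := by
  rw [← YoungDiagram.mem_cells]
  simp only [Gamma, Finset.mem_filter, Finset.mem_product, Finset.mem_range]
  constructor
  · rintro ⟨_, h⟩; exact h
  · intro h; refine ⟨⟨?_, ?_⟩, h⟩ <;> omega

theorem Gamma_transpose (r c : ℕ) : (Gamma r c).transpose = Gamma r c := by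
  ext ⟨i, j⟩
  rw [YoungDiagram.mem_cells, YoungDiagram.mem_cells, YoungDiagram.mem_transpose]
  show (j, i) ∈ Gamma r c ↔ (i, j) ∈ Gamma r c
  rw [mem_Gamma, mem_Gamma]; tauto

def grow (r c i : ℕ) : ℕ := if i < r then c - 2 * i else (c + 1 - i) / 2

theorem rowLen_Gamma {r c : ℕ} (hrc : 3 * r ≤ c + 2) (hcr : c ≤ 3 * r) (i : ℕ) :
    (Gamma r c).rowLen i = grow r c i := by
  have key : ∀ j, (i, j) ∈ Gamma r c ↔ j < grow r c i := by
    intro j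
    rw [mem_Gamma, grow]
    split <;> rename_i h
    · constructor
      · rintro (⟨_, h2⟩ | ⟨h1, h2⟩) <;> omega
      · intro hj; left; omega
    · constructor
      · rintro (⟨h1, _⟩ | ⟨h1, h2⟩) <;> omega
      · intro hj; right; omega
  have h1 := (key ((Gamma r c).rowLen i)).mpr
  have h2 := (key (grow r c i)).mp
  rw [YoungDiagram.mem_iff_lt_rowLen] at h1 h2
  omega

theorem colLen_Gamma {r c : ℕ} (hrc : 3 * r ≤ c + 2) (hcr : c ≤ 3 * r) (j : ℕ) :
    (Gamma r c).colLen j = grow r c j := by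
  rw [← YoungDiagram.rowLen_transpose, Gamma_transpose, rowLen_Gamma hrc hcr]

theorem card_eq_sum_rowLens' (γ : YoungDiagram) (N : ℕ) (hN : γ.colLen 0 ≤ N) :
    γ.cells.card = ∑ i ∈ Finset.range N, γ.rowLen i := by
  have hcells : γ.cells = (Finset.range N).biUnion
      (fun i => {i} ×ˢ Finset.range (γ.rowLen i)) := by
    ext ⟨i, j⟩
    simp only [YoungDiagram.mem_cells, Finset.mem_biUnion, Finset.mem_range, Finset.mem_product,
      Finset.mem_singleton]
    constructor
    · intro h
      refine ⟨i, ?_, rfl, ?_⟩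
      · have : i < γ.colLen 0 := by
          rw [← YoungDiagram.mem_iff_lt_colLen]
          exact γ.up_left_mem le_rfl (Nat.zero_le _) h
        omega
      · rwa [← YoungDiagram.mem_iff_lt_rowLen]
    · rintro ⟨i', _, rfl, hj⟩
      rwa [YoungDiagram.mem_iff_lt_rowLen]
  rw [hcells, Finset.card_biUnion]
  · congr 1; ext i; rw [Finset.card_product, Finset.card_singleton, Finset.card_range, one_mul]
  · rintro a _ b _ hab
    simp only [Finset.disjoint_left]
    rintro ⟨x, y⟩ hx hy
    simp_all [Finset.mem_product]

theorem sumA (c : ℕ) : ∀ n, 2 * n ≤ c + 2 → (∑ i ∈ Finset.range n, (c - 2 * i)) + n * n = n * c + n := by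
  intro n
  induction n with
  | zero => simp
  | succ n ih =>
    intro h
    rw [Finset.sum_range_succ]
    have ih' := ih (by omega)
    have h2 : 2 * n ≤ c := by omega
    zify [h2] at ih' ⊢
    linear_combination ih'

theorem sumB : ∀ m : ℕ, ∑ t ∈ Finset.range (2 * m), (t + 2) / 2 = m * m + m := by
  intro m
  induction m with
  | zero => simp
  | succ m ih =>
    have : 2 * (m + 1) = (2 * m) + 1 + 1 := by ring
    rw [this, Finset.sum_range_succ, Finset.sum_range_succ, ih]
    have e1 : (2 * m + 2) / 2 = m + 1 := by omega
    have e2 : (2 * m + 1 + 2) / 2 = m + 1 := by omega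
    rw [e1, e2]; ring

theorem card_Gamma_aux {r c m : ℕ} (h1 : 1 ≤ r) (h2 : 3 * r ≤ c + 2) (h3 : c ≤ 3 * r)
    (hm : c = r + 2 * m) :
    (Gamma r c).cells.card + r * r = r * c + r + m * m + m := by
  have hc0 : (Gamma r c).colLen 0 = c := by
    rw [colLen_Gamma h2 h3, grow, if_pos (by omega : 0 < r)]
    omega
  rw [card_eq_sum_rowLens' _ c (le_of_eq hc0)]
  have hsplit : ∑ i ∈ Finset.range c, (Gamma r c).rowLen i
      = (∑ i ∈ Finset.range r, (c - 2 * i)) + ∑ t ∈ Finset.range (2 * m), (t + 2) / 2 := by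
    rw [Finset.range_eq_Ico, ← Finset.sum_Ico_consecutive _ (Nat.zero_le r) (by omega : r ≤ c)]
    congr 1
    · rw [← Finset.range_eq_Ico]
      apply Finset.sum_congr rfl
      intro i hi
      rw [Finset.mem_range] at hi
      rw [rowLen_Gamma h2 h3, grow, if_pos hi]
    · rw [Finset.sum_Ico_eq_sum_range]
      have hk : c - r = 2 * m := by omega
      rw [hk]
      rw [← Finset.sum_range_reflect (fun t => (t + 2) / 2) (2 * m)]
      apply Finset.sum_congr rfl
      intro t ht
      rw [Finset.mem_range] at ht
      rw [rowLen_Gamma h2 h3, grow, if_neg (by omega)]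
      congr 1
      omega
  rw [hsplit, sumB]
  have := sumA c r (by omega)
  omega

theorem card_Gamma_plus {r : ℕ} (h1 : 1 ≤ r) :
    (Gamma r (3 * r)).cells.card = r * (3 * r + 2) := by
  have := card_Gamma_aux (r := r) (c := 3 * r) (m := r) h1 (by omega) (by omega) (by ring)
  nlinarith [this]

theorem card_Gamma_minus {r : ℕ} (h1 : 1 ≤ r) :
    (Gamma r (3 * r - 2)).cells.card = r * (3 * r - 2) := by
  have := card_Gamma_aux (r := r) (c := 3 * r - 2) (m := r - 1) h1 (by omega) (by omega) (by omega)
  have e : r * (3 * r - 2) + r * r = r * (3 * r - 2) + r + (r-1) * (r-1) + (r-1) := by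
    zify [show (2:ℕ) ≤ 3 * r by omega, h1]
    ring
  omega

lemma nat_eq_of_lt_iff {a b : ℕ} (h : ∀ j, j < a ↔ j < b) : a = b := by
  have h1 := h a; have h2 := h b; omega

/-- delete the first row and first column. -/
def shrink (γ : YoungDiagram) : YoungDiagram where
  cells := ((Finset.range (γ.rowLen 0 + γ.colLen 0)) ×ˢ
      (Finset.range (γ.rowLen 0 + γ.colLen 0))).filter
    (fun p => (p.1 + 1, p.2 + 1) ∈ γ)
  isLowerSet := by
    rintro ⟨i, j⟩ ⟨i', j'⟩ ⟨hi, hj⟩ hm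
    simp only [Finset.coe_filter, Finset.mem_coe, Finset.mem_product, Finset.mem_range,
      Set.mem_setOf_eq] at hm ⊢
    obtain ⟨⟨h1, h2⟩, h3⟩ := hm
    exact ⟨⟨by omega, by omega⟩,
      γ.up_left_mem (by simpa using Nat.succ_le_succ hi) (by simpa using Nat.succ_le_succ hj) h3⟩

theorem mem_shrink {γ : YoungDiagram} {i j : ℕ} : (i, j) ∈ shrink γ ↔ (i + 1, j + 1) ∈ γ := by
  rw [← YoungDiagram.mem_cells]
  simp only [shrink, Finset.mem_filter, Finset.mem_product, Finset.mem_range]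
  constructor
  · rintro ⟨_, h⟩; exact h
  · intro h
    have hr : j + 1 < γ.rowLen (i + 1) := YoungDiagram.mem_iff_lt_rowLen.mp h
    have hc : i + 1 < γ.colLen (j + 1) := YoungDiagram.mem_iff_lt_colLen.mp h
    have hr0 := γ.rowLen_anti 0 (i + 1) (by omega)
    have hc0 := γ.colLen_anti 0 (j + 1) (by omega)
    exact ⟨⟨by omega, by omega⟩, h⟩

theorem rowLen_shrink (γ : YoungDiagram) (i : ℕ) :
    (shrink γ).rowLen i = γ.rowLen (i + 1) - 1 := by
  apply nat_eq_of_lt_iff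
  intro j
  rw [← YoungDiagram.mem_iff_lt_rowLen, mem_shrink, YoungDiagram.mem_iff_lt_rowLen]
  omega

theorem transpose_shrink (γ : YoungDiagram) (h : γ.transpose = γ) :
    (shrink γ).transpose = shrink γ := by
  ext ⟨i, j⟩
  rw [YoungDiagram.mem_cells, YoungDiagram.mem_cells, YoungDiagram.mem_transpose]
  show (j, i) ∈ shrink γ ↔ (i, j) ∈ shrink γ
  have key : ∀ a b : ℕ, (a, b) ∈ γ ↔ (b, a) ∈ γ := by
    intro a b
    conv_lhs => rw [← h]
    rw [YoungDiagram.mem_transpose, Prod.swap_prod_mk]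
  rw [mem_shrink, mem_shrink, key]

theorem colLen_shrink (γ : YoungDiagram) (j : ℕ) :
    (shrink γ).colLen j = γ.colLen (j + 1) - 1 := by
  apply nat_eq_of_lt_iff
  intro i
  rw [← YoungDiagram.mem_iff_lt_colLen, mem_shrink, YoungDiagram.mem_iff_lt_colLen]
  omega

theorem isTCore_shrink (γ : YoungDiagram) (h : IsTCore γ 3) : IsTCore (shrink γ) 3 := by
  rintro ⟨i, j⟩ hm
  rw [YoungDiagram.mem_cells, mem_shrink] at hm
  have := h (i + 1, j + 1) ((YoungDiagram.mem_cells _).mpr hm)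
  have hr : j + 1 < γ.rowLen (i + 1) := YoungDiagram.mem_iff_lt_rowLen.mp hm
  have hc : i + 1 < γ.colLen (j + 1) := YoungDiagram.mem_iff_lt_colLen.mp hm
  simp only [hookLen, rowLen_shrink, colLen_shrink] at this ⊢
  have heq : (γ.rowLen (i + 1) - 1) + (γ.colLen (j + 1) - 1) - i - j - 1
      = γ.rowLen (i + 1) + γ.colLen (j + 1) - (i + 1) - (j + 1) - 1 := by omega
  rw [heq]
  exact this

theorem card_shrink (γ : YoungDiagram) (h0 : (0, 0) ∈ γ) :
    γ.cells.card = (shrink γ).cells.card + γ.rowLen 0 + (γ.colLen 0 - 1) := by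
  classical
  set A := γ.cells.filter (fun p => 0 < p.1 ∧ 0 < p.2) with hA
  set B := γ.cells.filter (fun p => p.1 = 0) with hB
  set C := γ.cells.filter (fun p => 0 < p.1 ∧ p.2 = 0) with hC
  have hsplit : γ.cells = A ∪ B ∪ C := by
    ext ⟨i, j⟩
    simp only [hA, hB, hC, Finset.mem_union, Finset.mem_filter]
    constructor
    · intro hm
      rcases Nat.eq_zero_or_pos i with hi | hi
      · exact Or.inl (Or.inr ⟨hm, hi⟩)
      rcases Nat.eq_zero_or_pos j with hj | hj
      · exact Or.inr ⟨hm, hi, hj⟩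
      · exact Or.inl (Or.inl ⟨hm, hi, hj⟩)
    · rintro ((h | h) | h) <;> exact h.1
  have hdisj1 : Disjoint A B := by
    simp only [Finset.disjoint_left, hA, hB, Finset.mem_filter]
    rintro ⟨i, j⟩ h1 h2
    omega
  have hdisj2 : Disjoint (A ∪ B) C := by
    simp only [Finset.disjoint_left, hA, hB, hC, Finset.mem_union, Finset.mem_filter]
    rintro ⟨i, j⟩ h1 h2
    rcases h1 with h1 | h1 <;> omega
  have hcardA : A.card = (shrink γ).cells.card := by
    have himg : A = (shrink γ).cells.image (fun p => (p.1 + 1, p.2 + 1)) := by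
      ext ⟨i, j⟩
      simp only [hA, Finset.mem_filter, Finset.mem_image, YoungDiagram.mem_cells]
      constructor
      · rintro ⟨hm, hi, hj⟩
        refine ⟨(i - 1, j - 1), ?_, by simp only [Prod.mk.injEq]; omega⟩
        rw [mem_shrink]
        have : (i - 1 + 1, j - 1 + 1) = (i, j) := by simp only [Prod.mk.injEq]; omega
        rw [this]; exact hm
      · rintro ⟨⟨a, b⟩, hm, heq⟩
        rw [mem_shrink] at hm
        simp only [Prod.mk.injEq] at heq
        obtain ⟨h1, h2⟩ := heq
        subst h1; subst h2
        exact ⟨hm, by omega, by omega⟩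
    rw [himg, Finset.card_image_of_injective]
    intro p q hpq
    simp only [Prod.mk.injEq] at hpq
    ext <;> omega
  have hcardB : B.card = γ.rowLen 0 := by
    have : B = γ.row 0 := by
      rw [hB, YoungDiagram.row]
    rw [this, ← YoungDiagram.rowLen_eq_card]
  have hcardC : C.card = γ.colLen 0 - 1 := by
    have hCeq : C = (γ.col 0).erase (0, 0) := by
      ext ⟨i, j⟩
      simp only [hC, Finset.mem_filter, Finset.mem_erase, YoungDiagram.mem_col_iff,
        YoungDiagram.mem_cells, Ne, Prod.mk.injEq]
      constructor
      · rintro ⟨hm, hi, hj⟩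
        exact ⟨by omega, hm, hj⟩
      · rintro ⟨hne, hm, hj⟩
        exact ⟨hm, by omega, hj⟩
    rw [hCeq, Finset.card_erase_of_mem, ← YoungDiagram.colLen_eq_card]
    rw [YoungDiagram.mem_col_iff]
    exact ⟨h0, rfl⟩
  rw [hsplit, Finset.card_union_of_disjoint hdisj2, Finset.card_union_of_disjoint hdisj1,
    hcardA, hcardB, hcardC]

theorem isTCore_Gamma {r c : ℕ} (h1 : 1 ≤ r) (h2 : 3 * r ≤ c + 2) (h3 : c ≤ 3 * r)
    (hc3 : c % 3 ≠ 2) : IsTCore (Gamma r c) 3 := by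
  rintro ⟨i, j⟩ hm
  rw [YoungDiagram.mem_cells, mem_Gamma] at hm
  unfold hookLen
  rw [rowLen_Gamma h2 h3, colLen_Gamma h2 h3]
  unfold grow
  split <;> split <;> omega

theorem ext_rowLen {γ μ : YoungDiagram} (h : ∀ i, γ.rowLen i = μ.rowLen i) : γ = μ := by
  ext ⟨i, j⟩
  rw [YoungDiagram.mem_cells, YoungDiagram.mem_cells]
  show (i, j) ∈ γ ↔ (i, j) ∈ μ
  rw [YoungDiagram.mem_iff_lt_rowLen, YoungDiagram.mem_iff_lt_rowLen, h i]

theorem rowLen_pos_iff {γ : YoungDiagram} {i : ℕ} : 0 < γ.rowLen i ↔ i < γ.colLen 0 := by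
  rw [← YoungDiagram.mem_iff_lt_colLen, YoungDiagram.mem_iff_lt_rowLen]

theorem classify : ∀ n : ℕ, ∀ γ : YoungDiagram, γ.cells.card = n → γ.transpose = γ →
    IsTCore γ 3 → 0 < n →
    ∃ r, 1 ≤ r ∧ (γ = Gamma r (3 * r) ∨ γ = Gamma r (3 * r - 2)) := by
  intro n
  induction n using Nat.strong_induction_on with
  | _ n IH =>
  intro γ hcard hT hcore hn
  have hsym : ∀ k, γ.colLen k = γ.rowLen k := by
    intro k
    rw [← YoungDiagram.rowLen_transpose, hT]
  have hne : (0, 0) ∈ γ := by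
    obtain ⟨⟨a, b⟩, hp⟩ := Finset.card_pos.mp (by omega : 0 < γ.cells.card)
    exact γ.up_left_mem (Nat.zero_le a) (Nat.zero_le b) ((YoungDiagram.mem_cells _).mp hp)
  set L := γ.rowLen 0 with hLdef
  have hL1 : 1 ≤ L := by
    have := YoungDiagram.mem_iff_lt_rowLen.mp hne
    omega
  have hposiff : ∀ i, 0 < γ.rowLen i ↔ i < L := by
    intro i
    rw [rowLen_pos_iff, hsym 0]
  have hook : ∀ i j : ℕ, (i, j) ∈ γ → ¬ 3 ∣ (γ.rowLen i + γ.rowLen j - i - j - 1) := by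
    intro i j hm
    have h := hcore (i, j) ((YoungDiagram.mem_cells _).mpr hm)
    simpa [hookLen, hsym] using h
  have h00 := hook 0 0 hne
  by_cases hsh : (shrink γ).cells.card = 0
  · -- base case : shrink is empty
    have hnotin : ∀ i j : ℕ, (i + 1, j + 1) ∉ γ := by
      intro i j hmem
      have hmem' : (i, j) ∈ (shrink γ).cells :=
        (YoungDiagram.mem_cells _).mpr (mem_shrink.mpr hmem)
      rw [Finset.card_eq_zero] at hsh
      rw [hsh] at hmem'
      exact absurd hmem' (Finset.notMem_empty _)
    have hrow : ∀ i, 1 ≤ i → γ.rowLen i ≤ 1 := by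
      intro i hi
      by_contra hcon
      push_neg at hcon
      have hmem : (i, 1) ∈ γ := YoungDiagram.mem_iff_lt_rowLen.mpr (by omega)
      have hni := hnotin (i - 1) 0
      rw [show i - 1 + 1 = i from by omega] at hni
      exact hni hmem
    have hrowval : ∀ i, 1 ≤ i → i < L → γ.rowLen i = 1 := by
      intro i hi hiL
      have := hrow i hi
      have := (hposiff i).mpr hiL
      omega
    have hL3 : L = 1 ∨ L = 3 := by
      by_cases h4 : 4 ≤ L
      · exfalso
        have hmem : (0, L - 3) ∈ γ := YoungDiagram.mem_iff_lt_rowLen.mpr (by omega)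
        have h3 := hook 0 (L - 3) hmem
        rw [hrowval (L - 3) (by omega) (by omega)] at h3
        exact h3 (by omega)
      · omega
    refine ⟨1, le_refl 1, ?_⟩
    have hmain : ∀ c, c = L → γ = Gamma 1 c := by
      intro c hc
      apply ext_rowLen
      intro i
      rw [rowLen_Gamma (by omega) (by omega)]
      unfold grow
      rcases Nat.eq_zero_or_pos i with hi | hi
      · subst hi
        simp only [if_pos (by omega : 0 < 1)]
        omega
      · rw [if_neg (by omega)]
        have h1 := hrow i hi
        have h2 := hposiff i
        omega
    rcases hL3 with hL | hL
    · exact Or.inr (by have := hmain 1 hL.symm; convert this using 2)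
    · exact Or.inl (by have := hmain 3 hL.symm; convert this using 2)
  · -- inductive step
    have hsc := card_shrink γ hne
    rw [hsym 0] at hsc
    have hlt : (shrink γ).cells.card < n := by omega
    obtain ⟨r, hr1, hgam⟩ := IH _ hlt (shrink γ) rfl (transpose_shrink γ hT)
      (isTCore_shrink γ hcore) (by omega)
    have key : ∀ c, shrink γ = Gamma r c → 3 * r ≤ c + 2 → c ≤ 3 * r → c % 3 ≠ 2 →
        γ = Gamma (r + 1) (c + 3) := by
      intro c hg h2 h3 hmod
      have hrowsh : ∀ i, γ.rowLen (i + 1) - 1 = grow r c i := by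
        intro i
        rw [← rowLen_shrink, hg, rowLen_Gamma h2 h3]
      have hgrowpos : ∀ i, i < c → 0 < grow r c i := by
        intro i hi
        unfold grow
        split <;> omega
      have hrow1 : ∀ i, i < c → γ.rowLen (i + 1) = grow r c i + 1 := by
        intro i hi
        have ha := hrowsh i
        have hb := hgrowpos i hi
        omega
      have hc1 : 1 ≤ c := by omega
      have hgrow0 : grow r c 0 = c := by
        unfold grow
        rw [if_pos (by omega)]
        omega
      have hrl1 : γ.rowLen 1 = c + 1 := by
        have := hrow1 0 hc1
        rwa [hgrow0] at this
      have hLc : c + 1 ≤ L := by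
        have := γ.rowLen_anti 0 1 (by omega)
        omega
      have hrowtail : ∀ i, c < i → i < L → γ.rowLen i = 1 := by
        intro i hci hiL
        have ha := hrowsh (i - 1)
        have hb : grow r c (i - 1) = (c + 1 - (i - 1)) / 2 := by
          unfold grow
          rw [if_neg (by omega)]
        rw [hb, show i - 1 + 1 = i from by omega] at ha
        have hc := (hposiff i).mpr hiL
        omega
      have h01 : ¬ 3 ∣ (L + (c + 1) - 0 - 1 - 1) := by
        have hmem : (0, 1) ∈ γ := YoungDiagram.mem_iff_lt_rowLen.mpr (by omega)
        have := hook 0 1 hmem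
        rwa [hrl1] at this
      have hLle : L ≤ c + 3 := by
        by_contra hcon
        push_neg at hcon
        have hmem : (0, L - 3) ∈ γ := YoungDiagram.mem_iff_lt_rowLen.mpr (by omega)
        have h3' := hook 0 (L - 3) hmem
        rw [hrowtail (L - 3) (by omega) (by omega)] at h3'
        exact h3' (by omega)
      have hLeq : L = c + 3 := by
        rcases (show L = c + 1 ∨ L = c + 2 ∨ L = c + 3 by omega) with h | h | h
        · exfalso
          rcases (show c % 3 = 0 ∨ c % 3 = 1 by omega) with h' | h'
          · exact h01 (by omega)
          · exact h00 (by omega)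
        · exfalso
          rcases (show c % 3 = 0 ∨ c % 3 = 1 by omega) with h' | h'
          · exact h00 (by omega)
          · exact h01 (by omega)
        · exact h
      apply ext_rowLen
      intro i
      rw [rowLen_Gamma (by omega) (by omega)]
      match i with
      | 0 =>
        unfold grow
        rw [if_pos (by omega)]
        omega
      | (k + 1) =>
        have hs := hrowsh k
        have hp := hposiff (k + 1)
        unfold grow at hs ⊢
        split at hs <;> split <;> omega
    rcases hgam with hg | hg
    · refine ⟨r + 1, by omega, Or.inl ?_⟩
      rw [show 3 * (r + 1) = 3 * r + 3 from by ring]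
      exact key (3 * r) hg (by omega) (by omega) (by omega)
    · refine ⟨r + 1, by omega, Or.inr ?_⟩
      rw [show 3 * (r + 1) - 2 = (3 * r - 2) + 3 from by omega]
      exact key (3 * r - 2) hg (by omega) (by omega) (by omega)

theorem nt_plus_inj {r s : ℕ} (h : r * (3 * r + 2) = s * (3 * s + 2)) : r = s := by
  rcases lt_trichotomy r s with hlt | heq | hlt
  · exfalso; nlinarith
  · exact heq
  · exfalso; nlinarith

theorem nt_minus_inj {r s : ℕ} (hr : 1 ≤ r) (hs : 1 ≤ s)
    (h : r * (3 * r - 2) = s * (3 * s - 2)) : r = s := by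
  have hZ : (r : ℤ) * (3 * r - 2) = (s : ℤ) * (3 * s - 2) := by
    have := congrArg (Nat.cast : ℕ → ℤ) h
    push_cast [show 2 ≤ 3 * r from by omega, show 2 ≤ 3 * s from by omega] at this
    linarith [this]
  have hf : ((3 * (r : ℤ) - 1) - (3 * s - 1)) * ((3 * (r : ℤ) - 1) + (3 * s - 1)) = 0 := by
    linear_combination 3 * hZ
  rcases mul_eq_zero.mp hf with h' | h' <;> omega

theorem nt_cross {r s : ℕ} (hr : 1 ≤ r) (hs : 1 ≤ s) :
    r * (3 * r + 2) ≠ s * (3 * s - 2) := by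
  intro h
  have hZ : (r : ℤ) * (3 * r + 2) = (s : ℤ) * (3 * s - 2) := by
    have := congrArg (Nat.cast : ℕ → ℤ) h
    push_cast [show 2 ≤ 3 * s from by omega] at this
    linarith [this]
  have hf : ((3 * (r : ℤ) + 1) - (3 * s - 1)) * ((3 * (r : ℤ) + 1) + (3 * s - 1)) = 0 := by
    linear_combination 3 * hZ
  rcases mul_eq_zero.mp hf with h' | h' <;> omega

theorem stmt13 (n : ℕ) (hn : 0 < n) :
    ((∃ r : ℕ, 1 ≤ r ∧ (n = r * (3 * r + 2) ∨ n = r * (3 * r - 2))) →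
      Set.ncard {γ : YoungDiagram |
        γ.cells.card = n ∧ γ.transpose = γ ∧ IsTCore γ 3} = 1) ∧
    ((¬ ∃ r : ℕ, 1 ≤ r ∧ (n = r * (3 * r + 2) ∨ n = r * (3 * r - 2))) →
      Set.ncard {γ : YoungDiagram |
        γ.cells.card = n ∧ γ.transpose = γ ∧ IsTCore γ 3} = 0) := by
  constructor
  · rintro ⟨r, hr, hcase | hcase⟩
    · have hset : {γ : YoungDiagram |
          γ.cells.card = n ∧ γ.transpose = γ ∧ IsTCore γ 3} = {Gamma r (3 * r)} := by
        apply Set.eq_singleton_iff_unique_mem.mpr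
        constructor
        · refine ⟨?_, Gamma_transpose r (3 * r),
            isTCore_Gamma hr (by omega) (by omega) (by omega)⟩
          rw [card_Gamma_plus hr, hcase]
        · rintro γ ⟨hc, hT, hcore⟩
          obtain ⟨s, hs, hor⟩ := classify n γ hc hT hcore hn
          rcases hor with h | h
          · have hcs : s * (3 * s + 2) = n := by rw [← hc, h, card_Gamma_plus hs]
            have : s = r := nt_plus_inj (by omega)
            rw [h, this]
          · exfalso
            have hcs : s * (3 * s - 2) = n := by rw [← hc, h, card_Gamma_minus hs]
            exact nt_cross hr hs (by omega)
      rw [hset, Set.ncard_singleton]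
    · have hset : {γ : YoungDiagram |
          γ.cells.card = n ∧ γ.transpose = γ ∧ IsTCore γ 3} = {Gamma r (3 * r - 2)} := by
        apply Set.eq_singleton_iff_unique_mem.mpr
        constructor
        · refine ⟨?_, Gamma_transpose r (3 * r - 2),
            isTCore_Gamma hr (by omega) (by omega) (by omega)⟩
          rw [card_Gamma_minus hr, hcase]
        · rintro γ ⟨hc, hT, hcore⟩
          obtain ⟨s, hs, hor⟩ := classify n γ hc hT hcore hn
          rcases hor with h | h
          · exfalso
            have hcs : s * (3 * s + 2) = n := by rw [← hc, h, card_Gamma_plus hs]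
            exact nt_cross hs hr (by omega)
          · have hcs : s * (3 * s - 2) = n := by rw [← hc, h, card_Gamma_minus hs]
            have : s = r := nt_minus_inj hs hr (by omega)
            rw [h, this]
      rw [hset, Set.ncard_singleton]
  · intro hno
    have hset : {γ : YoungDiagram |
        γ.cells.card = n ∧ γ.transpose = γ ∧ IsTCore γ 3} = ∅ := by
      ext γ
      simp only [Set.mem_setOf_eq, Set.mem_empty_iff_false, iff_false, not_and]
      intro hc hT hcore
      obtain ⟨s, hs, hor⟩ := classify n γ hc hT hcore hn
      apply hno
      refine ⟨s, hs, ?_⟩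
      rcases hor with h | h
      · left; rw [← hc, h, card_Gamma_plus hs]
      · right; rw [← hc, h, card_Gamma_minus hs]
    rw [hset, Set.ncard_empty]
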